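/- Let V : Ω → [0,∞) be measurable and integrable on bounded subsets of Ω. Let h : ℝ → ℂ be continuously differentiable with h and h′ square integrable over ℝ and with ∫_ℝ V̂(x)·|h(x)|² dx < ∞, where V̂(x) = (2/d)∫₀^d V(x,y)·sin²(πy/(2d)) dy. Set v(x,y) = h(x)·sin(πy/(2d)). Then ∫_Ω ( |∇v(x,y)|² − (π²/(4d²))·|v(x,y)|² ) dx dy − 2∫_Ω V(x,y)·|v(x,y)|² dx dy = (d/2)·( ∫_ℝ |h′(x)|² dx − 2∫_ℝ V̂(x)·|h(x)|² dx ). -/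

import Mathlib

open Real MeasureTheory

/-- The strip `Ω = ℝ × (0,d)`. -/
def Strip (d : ℝ) : Set (ℝ × ℝ) := Set.univ ×ˢ Set.Ioo 0 d

/-- `V̂(x) = (2/d)∫₀^d V(x,y)·sin²(πy/(2d)) dy`. -/
noncomputable def Vhat (d : ℝ) (V : ℝ × ℝ → ℝ) (x : ℝ) : ℝ :=
  (2 / d) * ∫ y in (0:ℝ)..d, V (x, y) * Real.sin (π * y / (2 * d)) ^ 2

lemma sinC_hasDerivAt (d : ℝ) (y : ℝ) :
    HasDerivAt (fun y : ℝ => ((Real.sin (π * y / (2 * d)) : ℝ) : ℂ))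
      ((π / (2 * d) * Real.cos (π * y / (2 * d)) : ℝ) : ℂ) y := by
  have h1 : HasDerivAt (fun y : ℝ => π * y / (2 * d)) (π / (2 * d)) y := by
    simpa [mul_comm, mul_div_assoc, div_mul_eq_mul_div] using
      (hasDerivAt_id y).const_mul (π / (2 * d))
  have h2 := (Real.hasDerivAt_sin (π * y / (2 * d))).comp y h1
  have h3 := h2.ofReal_comp
  simpa [Function.comp, mul_comm] using h3

lemma sin_hasDerivAt (d : ℝ) (hd : 0 < d) (y : ℝ) :
    HasDerivAt (fun y : ℝ => y / 2 - d / (2 * π) * Real.sin (π * y / d))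
      (Real.sin (π * y / (2 * d)) ^ 2) y := by
  have h1 : HasDerivAt (fun y : ℝ => π * y / d) (π / d) y := by
    simpa [mul_comm, mul_div_assoc, div_mul_eq_mul_div] using
      (hasDerivAt_id y).const_mul (π / d)
  have h2 := ((Real.hasDerivAt_sin (π * y / d)).comp y h1).const_mul (d / (2 * π))
  have h3 := ((hasDerivAt_id y).div_const 2).sub h2
  convert h3 using 1
  case e'_4 => rfl
  case e'_5 => rfl
  case e'_8 => rfl
  have h4 : Real.sin (π * y / (2 * d)) ^ 2 = 1 / 2 - Real.cos (2 * (π * y / (2 * d))) / 2 := by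
    rw [Real.sin_sq, Real.cos_sq]; ring
  have h5 : 2 * (π * y / (2 * d)) = π * y / d := by
    field_simp
  rw [h4, h5]
  have hπ : π ≠ 0 := Real.pi_ne_zero
  field_simp

lemma int_sin_sq (d : ℝ) (hd : 0 < d) :
    ∫ y in Set.Ioo (0:ℝ) d, Real.sin (π * y / (2 * d)) ^ 2 = d / 2 := by
  rw [← integral_Ioc_eq_integral_Ioo, ← intervalIntegral.integral_of_le hd.le]
  have key := intervalIntegral.integral_eq_sub_of_hasDerivAt
    (f := fun y : ℝ => y / 2 - d / (2 * π) * Real.sin (π * y / d))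
    (f' := fun y : ℝ => Real.sin (π * y / (2 * d)) ^ 2)
    (a := 0) (b := d)
    (fun y _ => sin_hasDerivAt d hd y)
    (Continuous.intervalIntegrable (by fun_prop) 0 d)
  rw [key]
  have : π * d / d = π := by field_simp
  simp [this, Real.sin_pi]

lemma int_cos (d : ℝ) (hd : 0 < d) :
    ∫ y in Set.Ioo (0:ℝ) d, Real.cos (π * y / d) = 0 := by
  rw [← integral_Ioc_eq_integral_Ioo, ← intervalIntegral.integral_of_le hd.le]
  have hder : ∀ y : ℝ, HasDerivAt (fun y : ℝ => d / π * Real.sin (π * y / d))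
      (Real.cos (π * y / d)) y := by
    intro y
    have h1 : HasDerivAt (fun y : ℝ => π * y / d) (π / d) y := by
      simpa [mul_comm, mul_div_assoc, div_mul_eq_mul_div] using
        (hasDerivAt_id y).const_mul (π / d)
    have h2 := ((Real.hasDerivAt_sin (π * y / d)).comp y h1).const_mul (d / π)
    convert h2 using 1
    case e'_4 => rfl
    case e'_5 => rfl
    case e'_8 => rfl
    have hπ : π ≠ 0 := Real.pi_ne_zero
    field_simp
  have key := intervalIntegral.integral_eq_sub_of_hasDerivAt
    (f := fun y : ℝ => d / π * Real.sin (π * y / d))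
    (f' := fun y : ℝ => Real.cos (π * y / d))
    (a := 0) (b := d)
    (fun y _ => hder y)
    (Continuous.intervalIntegrable (by fun_prop) 0 d)
  rw [key]
  have : π * d / d = π := by field_simp
  simp [this, Real.sin_pi]

lemma v_hasFDerivAt (d : ℝ) (h : ℝ → ℂ) (hh : ContDiff ℝ 1 h) (p : ℝ × ℝ) :
    HasFDerivAt (fun q : ℝ × ℝ => h q.1 * (Real.sin (π * q.2 / (2 * d)) : ℂ))
      (h p.1 • ((ContinuousLinearMap.smulRight (1 : ℝ →L[ℝ] ℝ)
            ((π / (2 * d) * Real.cos (π * p.2 / (2 * d)) : ℝ) : ℂ)).comp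
          (ContinuousLinearMap.snd ℝ ℝ ℝ)) +
        ((Real.sin (π * p.2 / (2 * d)) : ℝ) : ℂ) • ((fderiv ℝ h p.1).comp
          (ContinuousLinearMap.fst ℝ ℝ ℝ))) p := by
  have d1 : HasFDerivAt (fun q : ℝ × ℝ => h q.1)
      ((fderiv ℝ h p.1).comp (ContinuousLinearMap.fst ℝ ℝ ℝ)) p :=
    (hh.differentiable one_ne_zero p.1).hasFDerivAt.comp p hasFDerivAt_fst
  have d2 : HasFDerivAt (fun q : ℝ × ℝ => ((Real.sin (π * q.2 / (2 * d)) : ℝ) : ℂ))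
      ((ContinuousLinearMap.smulRight (1 : ℝ →L[ℝ] ℝ)
          ((π / (2 * d) * Real.cos (π * p.2 / (2 * d)) : ℝ) : ℂ)).comp
        (ContinuousLinearMap.snd ℝ ℝ ℝ)) p :=
    (sinC_hasDerivAt d p.2).hasFDerivAt.comp p hasFDerivAt_snd
  exact d1.mul d2

lemma v_fderiv_eval1 (d : ℝ) (h : ℝ → ℂ) (hh : ContDiff ℝ 1 h) (p : ℝ × ℝ) :
    fderiv ℝ (fun q : ℝ × ℝ => h q.1 * (Real.sin (π * q.2 / (2 * d)) : ℂ)) p (1, 0)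
      = ((Real.sin (π * p.2 / (2 * d)) : ℝ) : ℂ) * deriv h p.1 := by
  rw [(v_hasFDerivAt d h hh p).fderiv]
  simp [fderiv_apply_one_eq_deriv]

lemma v_fderiv_eval2 (d : ℝ) (h : ℝ → ℂ) (hh : ContDiff ℝ 1 h) (p : ℝ × ℝ) :
    fderiv ℝ (fun q : ℝ × ℝ => h q.1 * (Real.sin (π * q.2 / (2 * d)) : ℂ)) p (0, 1)
      = h p.1 * ((π / (2 * d) * Real.cos (π * p.2 / (2 * d)) : ℝ) : ℂ) := by
  rw [(v_hasFDerivAt d h hh p).fderiv]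
  simp

lemma Vae (d : ℝ) (V : ℝ × ℝ → ℝ)
    (hVloc : ∀ B : Set (ℝ × ℝ), Bornology.IsBounded B → IntegrableOn V (B ∩ Strip d)) :
    ∀ᵐ x : ℝ, Integrable (fun y => V (x, y)) (volume.restrict (Set.Ioo 0 d)) := by
  have key : ∀ n : ℕ, ∀ᵐ x : ℝ, x ∈ Set.Icc (-(n:ℝ)) n →
      Integrable (fun y => V (x, y)) (volume.restrict (Set.Ioo 0 d)) := by
    intro n
    have hB : Bornology.IsBounded ((Set.Icc (-(n:ℝ)) n) ×ˢ (Set.Icc (0:ℝ) d)) :=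
      (Metric.isBounded_Icc _ _).prod (Metric.isBounded_Icc _ _)
    have h1 := hVloc _ hB
    have hset : (Set.Icc (-(n:ℝ)) n) ×ˢ (Set.Icc (0:ℝ) d) ∩ Strip d
        = (Set.Icc (-(n:ℝ)) n) ×ˢ (Set.Ioo (0:ℝ) d) := by
      rw [Strip, Set.prod_inter_prod, Set.inter_univ,
        Set.inter_eq_right.mpr Set.Ioo_subset_Icc_self]
    rw [hset] at h1
    have h2 : Integrable V
        ((volume.restrict (Set.Icc (-(n:ℝ)) n)).prod (volume.restrict (Set.Ioo (0:ℝ) d))) := by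
      rw [Measure.prod_restrict, ← Measure.volume_eq_prod]; exact h1
    have h3 := h2.prod_right_ae
    exact (ae_restrict_iff' measurableSet_Icc).mp h3
  have key' := ae_all_iff.mpr key
  filter_upwards [key'] with x hx
  obtain ⟨n, hn⟩ := exists_nat_ge |x|
  exact hx n ⟨(abs_le.mp hn).1, (abs_le.mp hn).2⟩

/-- The restriction of the shifted waveguide quadratic form to product functions
`v(x,y) = h(x)·sin(πy/(2d))` equals `(d/2)` times the quadratic form of the
one-dimensional Schrödinger operator `−d²/dx² − 2V̂` on `L²(ℝ)`. -/
theorem stmt_7 (d : ℝ) (hd : 0 < d) (V : ℝ × ℝ → ℝ)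
    (hVmeas : Measurable V) (hVpos : ∀ p, 0 ≤ V p)
    (hVloc : ∀ B : Set (ℝ × ℝ), Bornology.IsBounded B → IntegrableOn V (B ∩ Strip d))
    (h : ℝ → ℂ) (hh : ContDiff ℝ 1 h)
    (hh2 : Integrable (fun x => ‖h x‖ ^ 2))
    (hh'2 : Integrable (fun x => ‖deriv h x‖ ^ 2))
    (hVh : Integrable (fun x => Vhat d V x * ‖h x‖ ^ 2))
    (v : ℝ × ℝ → ℂ)
    (hv : v = fun p => h p.1 * (Real.sin (π * p.2 / (2 * d)) : ℂ)) :
    (∫ p in Strip d,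
        ((‖fderiv ℝ v p (1, 0)‖ ^ 2 + ‖fderiv ℝ v p (0, 1)‖ ^ 2) -
          (π ^ 2 / (4 * d ^ 2)) * ‖v p‖ ^ 2)) -
      2 * ∫ p in Strip d, V p * ‖v p‖ ^ 2 =
    (d / 2) * ((∫ x : ℝ, ‖deriv h x‖ ^ 2) - 2 * ∫ x : ℝ, Vhat d V x * ‖h x‖ ^ 2) := by
  subst hv
  have hdne : d ≠ 0 := hd.ne'
  set μ := (volume : Measure ℝ).prod ((volume : Measure ℝ).restrict (Set.Ioo 0 d)) with hμ
  have hrestrict : (volume : Measure (ℝ × ℝ)).restrict (Strip d) = μ := by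
    rw [hμ, Strip, Measure.volume_eq_prod, ← Measure.prod_restrict, Measure.restrict_univ]
  -- the square-integrability of sin and cos pieces on the fibre
  have hs2int : Integrable (fun y : ℝ => Real.sin (π * y / (2 * d)) ^ 2)
      (volume.restrict (Set.Ioo 0 d)) :=
    ((Continuous.integrableOn_Icc (by fun_prop)).mono_set Set.Ioo_subset_Icc_self :
      IntegrableOn _ (Set.Ioo 0 d) volume)
  have hcosint : Integrable (fun y : ℝ => Real.cos (π * y / d))
      (volume.restrict (Set.Ioo 0 d)) :=
    ((Continuous.integrableOn_Icc (by fun_prop)).mono_set Set.Ioo_subset_Icc_self :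
      IntegrableOn _ (Set.Ioo 0 d) volume)
  -- First integral
  have I1 : (∫ p in Strip d,
        ((‖fderiv ℝ (fun q : ℝ × ℝ => h q.1 * (Real.sin (π * q.2 / (2 * d)) : ℂ)) p (1, 0)‖ ^ 2 +
          ‖fderiv ℝ (fun q : ℝ × ℝ => h q.1 * (Real.sin (π * q.2 / (2 * d)) : ℂ)) p (0, 1)‖ ^ 2) -
          (π ^ 2 / (4 * d ^ 2)) *
            ‖h p.1 * (Real.sin (π * p.2 / (2 * d)) : ℂ)‖ ^ 2))
      = (∫ x : ℝ, ‖deriv h x‖ ^ 2) * (d / 2) := by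
    rw [hrestrict]
    have hptwise : ∀ p : ℝ × ℝ,
        ((‖fderiv ℝ (fun q : ℝ × ℝ => h q.1 * (Real.sin (π * q.2 / (2 * d)) : ℂ)) p (1, 0)‖ ^ 2 +
          ‖fderiv ℝ (fun q : ℝ × ℝ => h q.1 * (Real.sin (π * q.2 / (2 * d)) : ℂ)) p (0, 1)‖ ^ 2) -
          (π ^ 2 / (4 * d ^ 2)) * ‖h p.1 * (Real.sin (π * p.2 / (2 * d)) : ℂ)‖ ^ 2)
        = ‖deriv h p.1‖ ^ 2 * Real.sin (π * p.2 / (2 * d)) ^ 2 +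
          (π ^ 2 / (4 * d ^ 2) * ‖h p.1‖ ^ 2) * Real.cos (π * p.2 / d) := by
      intro p
      rw [v_fderiv_eval1 d h hh p, v_fderiv_eval2 d h hh p]
      have e : π * p.2 / d = 2 * (π * p.2 / (2 * d)) := by field_simp
      rw [e, Real.cos_two_mul']
      simp only [norm_mul, Complex.norm_real, Real.norm_eq_abs, mul_pow, sq_abs]
      field_simp
      ring
    rw [integral_congr_ae (Filter.Eventually.of_forall hptwise)]
    have hint1 : Integrable
        (fun p : ℝ × ℝ => ‖deriv h p.1‖ ^ 2 * Real.sin (π * p.2 / (2 * d)) ^ 2) μ :=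
      hh'2.mul_prod hs2int
    have hint2 : Integrable
        (fun p : ℝ × ℝ => (π ^ 2 / (4 * d ^ 2) * ‖h p.1‖ ^ 2) * Real.cos (π * p.2 / d)) μ :=
      (hh2.const_mul _).mul_prod hcosint
    rw [integral_add hint1 hint2, hμ,
      MeasureTheory.integral_prod_mul (f := fun x : ℝ => ‖deriv h x‖ ^ 2)
        (g := fun y : ℝ => Real.sin (π * y / (2 * d)) ^ 2),
      MeasureTheory.integral_prod_mul (f := fun x : ℝ => π ^ 2 / (4 * d ^ 2) * ‖h x‖ ^ 2)
        (g := fun y : ℝ => Real.cos (π * y / d)),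
      int_sin_sq d hd, int_cos d hd, mul_zero, add_zero]
  -- Second integral
  have hcont : Continuous fun p : ℝ × ℝ => ‖h p.1‖ ^ 2 * Real.sin (π * p.2 / (2 * d)) ^ 2 := by
    have := hh.continuous
    fun_prop
  set G : ℝ × ℝ → ℝ :=
    fun p => (‖h p.1‖ ^ 2 * Real.sin (π * p.2 / (2 * d)) ^ 2) * V p with hG
  have hGmeas : AEStronglyMeasurable G μ :=
    (hcont.measurable.mul hVmeas).aestronglyMeasurable
  have hVae := Vae d V hVloc
  -- the inner integral identity
  have hinner : ∀ᵐ x : ℝ, (∫ y in Set.Ioo (0:ℝ) d, G (x, y))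
      = (d / 2) * (Vhat d V x * ‖h x‖ ^ 2) := by
    filter_upwards [hVae] with x hx
    have h1 : (∫ y in Set.Ioo (0:ℝ) d, G (x, y))
        = ‖h x‖ ^ 2 * ∫ y in Set.Ioo (0:ℝ) d, V (x, y) * Real.sin (π * y / (2 * d)) ^ 2 := by
      rw [← MeasureTheory.integral_const_mul]
      apply integral_congr_ae
      filter_upwards with y
      simp only [hG]
      ring
    have h2 : (∫ y in Set.Ioo (0:ℝ) d, V (x, y) * Real.sin (π * y / (2 * d)) ^ 2)
        = ∫ y in (0:ℝ)..d, V (x, y) * Real.sin (π * y / (2 * d)) ^ 2 := by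
      rw [intervalIntegral.integral_of_le hd.le, integral_Ioc_eq_integral_Ioo]
    rw [h1, h2, Vhat]
    field_simp
  have hGnonneg : ∀ p : ℝ × ℝ, 0 ≤ G p := fun p =>
    mul_nonneg (mul_nonneg (by positivity) (by positivity)) (hVpos p)
  have hGint : Integrable G μ := by
    refine (integrable_prod_iff hGmeas).mpr ⟨?_, ?_⟩
    · filter_upwards [hVae] with x hx
      have hf : Continuous fun y : ℝ => ‖h x‖ ^ 2 * Real.sin (π * y / (2 * d)) ^ 2 := by
        fun_prop
      have hb : Integrable
          (fun y => (‖h x‖ ^ 2 * Real.sin (π * y / (2 * d)) ^ 2) * V (x, y))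
          (volume.restrict (Set.Ioo 0 d)) := by
        refine hx.bdd_mul hf.aestronglyMeasurable (c := ‖h x‖ ^ 2) (Filter.Eventually.of_forall fun y => ?_)
        rw [Real.norm_of_nonneg (by positivity)]
        nlinarith [Real.sin_sq_le_one (π * y / (2 * d)), sq_nonneg (‖h x‖ * Real.sin (π * y / (2 * d)))]
      exact hb
    · apply ((hVh.const_mul (d / 2)).congr ?_)
      filter_upwards [hinner] with x hx
      rw [← hx]
      apply integral_congr_ae
      filter_upwards with y
      rw [Real.norm_of_nonneg (hGnonneg (x, y))]
  have I2 : (∫ p in Strip d, V p * ‖h p.1 * (Real.sin (π * p.2 / (2 * d)) : ℂ)‖ ^ 2)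
      = (d / 2) * ∫ x : ℝ, Vhat d V x * ‖h x‖ ^ 2 := by
    rw [hrestrict]
    have hpt : ∀ p : ℝ × ℝ,
        V p * ‖h p.1 * (Real.sin (π * p.2 / (2 * d)) : ℂ)‖ ^ 2 = G p := by
      intro p
      simp only [hG, norm_mul, Complex.norm_real, Real.norm_eq_abs, mul_pow, sq_abs]
      ring
    rw [integral_congr_ae (Filter.Eventually.of_forall hpt)]
    rw [show (∫ p, G p ∂μ) = ∫ x : ℝ, ∫ y in Set.Ioo (0:ℝ) d, G (x, y)
      from MeasureTheory.integral_prod G hGint]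
    rw [integral_congr_ae hinner, MeasureTheory.integral_const_mul]
  rw [I1, I2]
  ring
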